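/- arXiv:1405.2575 — 2 statements merged into one kernel-verified Lean document; each statement's English description precedes it below -/
import Mathlib

section
/- Let ν be a Lévy measure on ℝ^d, let γ ∈ (0,1], and assume ∫_{{|y| ≤ 1}} |y|^{1+γ} ν(dy) < ∞. Let g ∈ C_b^{1+γ}(ℝ^d). Then for every x ∈ ℝ^d the function y ↦ g(x+y) − g(x) − 1_{{|y|≤1}}(y) ⟨y, Dg(x)⟩ is ν-integrable, the function ℒg(x) = ∫_{ℝ^d} (g(x+y) − g(x) − 1_{{|y|≤1}}(y) ⟨y, Dg(x)⟩) ν(dy) is bounded and continuous on ℝ^d, and sup_x |ℒg(x)| ≤ 2 sup_x |g(x)| · ν({y : |y| > 1}) + [Dg]_γ ∫_{{|y| ≤ 1}} |y|^{1+γ} ν(dy). -/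
open MeasureTheory
open scoped ENNReal

noncomputable section

/-- A Lévy measure on `ℝ^d`: σ-finite, no mass at `0`, and `∫ min(1,|y|²) ν(dy) < ∞`. -/
def IsLevyMeasure {d : ℕ} (ν : Measure (EuclideanSpace ℝ (Fin d))) : Prop :=
  SigmaFinite ν ∧ ν {0} = 0 ∧
    (∫⁻ y, ENNReal.ofReal (min 1 (‖y‖ ^ 2)) ∂ν) < ⊤

/-- The `β`-Hölder seminorm `[f]_β` (as the least admissible Hölder constant). -/
def holderSemi {E F : Type*} [NormedAddCommGroup E] [NormedAddCommGroup F]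
    (β : ℝ) (f : E → F) : ℝ :=
  sInf {C : ℝ | 0 ≤ C ∧ ∀ x y, ‖f x - f y‖ ≤ C * ‖x - y‖ ^ β}

set_option maxHeartbeats 1000000

lemma taylor_bound {d : ℕ} (γ C : ℝ) (hγ0 : 0 < γ) (hC : 0 ≤ C)
    (g : EuclideanSpace ℝ (Fin d) → ℝ) (hg : ContDiff ℝ 1 g)
    (hH : ∀ x y, ‖fderiv ℝ g x - fderiv ℝ g y‖ ≤ C * ‖x - y‖ ^ γ)
    (x y : EuclideanSpace ℝ (Fin d)) :
    |g (x + y) - g x - fderiv ℝ g x y| ≤ C * ‖y‖ ^ (1 + γ) := by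
  rcases eq_or_ne y 0 with rfl | hy
  · simp [Real.zero_rpow (by positivity : (1:ℝ) + γ ≠ 0)]
  have hyn : (0:ℝ) < ‖y‖ := norm_pos_iff.2 hy
  set L := fderiv ℝ g x with hL
  have hdg := hg.differentiable one_ne_zero
  set h : EuclideanSpace ℝ (Fin d) → ℝ := fun z => g z - L z with hh
  have hmem : x + y ∈ Metric.closedBall x ‖y‖ := by
    simp [dist_eq_norm]
  have key : ‖h (x + y) - h x‖ ≤ (C * ‖y‖ ^ γ) * ‖(x + y) - x‖ :=
    (convex_closedBall x ‖y‖).norm_image_sub_le_of_norm_hasFDerivWithin_le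
      (f' := fun z => fderiv ℝ g z - L)
      (fun z _ => (((hdg z).hasFDerivAt.sub (L.hasFDerivAt)).hasFDerivWithinAt))
      (fun z hz => by
        calc ‖fderiv ℝ g z - L‖ ≤ C * ‖z - x‖ ^ γ := hH z x
          _ ≤ C * ‖y‖ ^ γ := by
              gcongr
              simpa [dist_eq_norm] using hz)
      (Metric.mem_closedBall_self hyn.le) hmem
  have h1 : h (x + y) - h x = g (x + y) - g x - L y := by
    simp only [hh]
    have : L (x + y) = L x + L y := by rw [map_add]
    ring_nf
    rw [this]; ring
  have h2 : (C * ‖y‖ ^ γ) * ‖(x + y) - x‖ = C * ‖y‖ ^ (1 + γ) := by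
    have : ‖(x + y) - x‖ = ‖y‖ := by simp
    rw [this, Real.rpow_add hyn, Real.rpow_one]
    ring
  rw [h1, h2] at key
  simpa [Real.norm_eq_abs] using key

/-- for `g ∈ C_b^{1+γ}(ℝ^d)` and a Lévy measure `ν` with
`∫_{|y|≤1} |y|^{1+γ} ν(dy) < ∞`, the integrand of `ℒg(x)` is `ν`-integrable,
`ℒg` is bounded and continuous, and
`sup_x |ℒg(x)| ≤ 2 ‖g‖_∞ ν(|y|>1) + [Dg]_γ ∫_{|y|≤1} |y|^{1+γ} ν(dy)`. -/
theorem generator_well_defined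
    (d : ℕ) (hd : 1 ≤ d) (γ : ℝ) (hγ : 0 < γ ∧ γ ≤ 1)
    (ν : Measure (EuclideanSpace ℝ (Fin d))) (hν : IsLevyMeasure ν)
    (hmom : (∫⁻ y in {y : EuclideanSpace ℝ (Fin d) | ‖y‖ ≤ 1},
      ENNReal.ofReal (‖y‖ ^ (1 + γ)) ∂ν) < ⊤)
    (g : EuclideanSpace ℝ (Fin d) → ℝ)
    (hg : ContDiff ℝ 1 g) (hgb : ∃ M, ∀ x, |g x| ≤ M)
    (hDgb : ∃ M, ∀ x, ‖fderiv ℝ g x‖ ≤ M)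
    (hDgH : ∃ C, 0 ≤ C ∧ ∀ x y, ‖fderiv ℝ g x - fderiv ℝ g y‖ ≤ C * ‖x - y‖ ^ γ) :
    (∀ x, Integrable (fun y =>
        g (x + y) - g x -
          Set.indicator {y : EuclideanSpace ℝ (Fin d) | ‖y‖ ≤ 1}
            (fun y => fderiv ℝ g x y) y) ν) ∧
    Continuous (fun x => ∫ y,
        (g (x + y) - g x -
          Set.indicator {y : EuclideanSpace ℝ (Fin d) | ‖y‖ ≤ 1}
            (fun y => fderiv ℝ g x y) y) ∂ν) ∧
    ∀ x, |∫ y, (g (x + y) - g x -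
          Set.indicator {y : EuclideanSpace ℝ (Fin d) | ‖y‖ ≤ 1}
            (fun y => fderiv ℝ g x y) y) ∂ν| ≤
      2 * (⨆ x, |g x|) * (ν {y : EuclideanSpace ℝ (Fin d) | 1 < ‖y‖}).toReal +
        holderSemi γ (fun x => fderiv ℝ g x) *
          (∫⁻ y in {y : EuclideanSpace ℝ (Fin d) | ‖y‖ ≤ 1},
            ENNReal.ofReal (‖y‖ ^ (1 + γ)) ∂ν).toReal := by
  set S : Set (EuclideanSpace ℝ (Fin d)) := {y : EuclideanSpace ℝ (Fin d) | ‖y‖ ≤ 1} with hSdef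
  have hS : MeasurableSet S :=
    measurableSet_le (f := fun y : EuclideanSpace ℝ (Fin d) => ‖y‖)
      continuous_norm.measurable measurable_const
  have hScompl : Sᶜ = {y : EuclideanSpace ℝ (Fin d) | 1 < ‖y‖} := by
    ext y; simp [hSdef, not_le]
  -- the sup of |g|
  set M := ⨆ x : EuclideanSpace ℝ (Fin d), |g x| with hMdef
  have hbdd : BddAbove (Set.range fun x : EuclideanSpace ℝ (Fin d) => |g x|) := by
    obtain ⟨M0, hM0⟩ := hgb
    exact ⟨M0, by rintro r ⟨x, rfl⟩; exact hM0 x⟩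
  have hM : ∀ x, |g x| ≤ M := fun x => le_ciSup hbdd x
  have hM0 : 0 ≤ M := le_trans (abs_nonneg _) (hM 0)
  -- the Hölder seminorm
  set C := holderSemi γ (fun x => fderiv ℝ g x) with hCdef
  have hTne : {c : ℝ | 0 ≤ c ∧ ∀ x y : EuclideanSpace ℝ (Fin d), ‖fderiv ℝ g x - fderiv ℝ g y‖ ≤ c * ‖x - y‖ ^ γ}.Nonempty := by obtain ⟨c, hc⟩ := hDgH; exact ⟨c, hc⟩
  have hC0 : 0 ≤ C := le_csInf hTne fun c hc => hc.1
  have hCH : ∀ x y : EuclideanSpace ℝ (Fin d), ‖fderiv ℝ g x - fderiv ℝ g y‖ ≤ C * ‖x - y‖ ^ γ := by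
    intro x y
    rcases eq_or_ne x y with rfl | hxy
    · simp [Real.zero_rpow hγ.1.ne']
    have hr : (0:ℝ) < ‖x - y‖ ^ γ := by
      apply Real.rpow_pos_of_pos
      rw [norm_pos_iff, sub_ne_zero]; exact hxy
    rw [← div_le_iff₀ hr] at *
    exact le_csInf hTne fun c hc => by
      rw [div_le_iff₀ hr]; exact hc.2 x y
  -- finiteness of ν on the complement
  have hν1 : ν Sᶜ < ⊤ := by
    have hSc : MeasurableSet Sᶜ := hS.compl
    have step : ν Sᶜ = ∫⁻ _ in Sᶜ, 1 ∂ν := (setLIntegral_one _).symm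
    rw [step]
    calc ∫⁻ _ in Sᶜ, 1 ∂ν
        ≤ ∫⁻ y in Sᶜ, ENNReal.ofReal (min 1 (‖y‖ ^ 2)) ∂ν := by
          apply setLIntegral_mono (by measurability)
          intro y hy
          rw [hScompl] at hy
          have hy' : 1 < ‖y‖ := hy
          have h1 : (1:ℝ) ≤ ‖y‖ ^ 2 := by nlinarith [hy'.le, norm_nonneg y]
          rw [min_eq_left h1]
          simp
      _ ≤ ∫⁻ y, ENNReal.ofReal (min 1 (‖y‖ ^ 2)) ∂ν := setLIntegral_le_lintegral _ _
      _ < ⊤ := hν.2.2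
  -- dominating function
  set h₀ : EuclideanSpace ℝ (Fin d) → ℝ := fun y =>
    S.indicator (fun y => C * ‖y‖ ^ (1 + γ)) y + Sᶜ.indicator (fun _ => 2 * M) y with hh₀
  have hrc : Continuous fun y : EuclideanSpace ℝ (Fin d) => C * ‖y‖ ^ (1 + γ) :=
    continuous_const.mul (continuous_norm.rpow_const fun y => Or.inr (by linarith [hγ.1]))
  have I1 : Integrable (S.indicator fun y : EuclideanSpace ℝ (Fin d) => C * ‖y‖ ^ (1 + γ)) ν := by
    rw [integrable_indicator_iff hS]
    refine ⟨hrc.aestronglyMeasurable.restrict, ?_⟩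
    rw [hasFiniteIntegral_iff_ofReal (Filter.Eventually.of_forall fun y => by positivity)]
    have heq : ∀ y : EuclideanSpace ℝ (Fin d), ENNReal.ofReal (C * ‖y‖ ^ (1 + γ))
        = ENNReal.ofReal C * ENNReal.ofReal (‖y‖ ^ (1 + γ)) := fun y => ENNReal.ofReal_mul hC0
    simp only [heq]
    rw [lintegral_const_mul' _ _ ENNReal.ofReal_ne_top]
    exact ENNReal.mul_lt_top ENNReal.ofReal_lt_top hmom
  have I2 : Integrable (Sᶜ.indicator fun _ : EuclideanSpace ℝ (Fin d) => 2 * M) ν := by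
    rw [integrable_indicator_iff hS.compl]
    exact integrableOn_const hν1.ne
  have hint_h₀ : Integrable h₀ ν := I1.add I2
  -- the pointwise bound
  have hbound : ∀ x y : EuclideanSpace ℝ (Fin d), ‖g (x + y) - g x -
      S.indicator (fun y => fderiv ℝ g x y) y‖ ≤ h₀ y := by
    intro x y
    by_cases hy : y ∈ S
    · rw [Set.indicator_of_mem hy]
      simp only [hh₀, Set.indicator_of_mem hy,
        Set.indicator_of_notMem (Set.notMem_compl_iff.2 hy), add_zero]
      rw [Real.norm_eq_abs]
      exact taylor_bound γ C hγ.1 hC0 g hg hCH x y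
    · rw [Set.indicator_of_notMem hy]
      simp only [hh₀, Set.indicator_of_notMem hy,
        Set.indicator_of_mem (Set.mem_compl hy), zero_add, sub_zero]
      calc ‖g (x + y) - g x‖ ≤ |g (x + y)| + |g x| := by
              rw [Real.norm_eq_abs]; exact abs_sub _ _
        _ ≤ M + M := add_le_add (hM _) (hM _)
        _ = 2 * M := by ring
  -- measurability of the integrand
  have hFmeas : ∀ x : EuclideanSpace ℝ (Fin d), AEStronglyMeasurable (fun y =>
      g (x + y) - g x - S.indicator (fun y => fderiv ℝ g x y) y) ν := by
    intro x
    apply AEStronglyMeasurable.sub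
    · exact ((hg.continuous.comp (continuous_const.add continuous_id)).sub
        continuous_const).aestronglyMeasurable
    · exact (((fderiv ℝ g x).continuous.stronglyMeasurable).indicator hS).aestronglyMeasurable
  -- integrability
  have hFint : ∀ x : EuclideanSpace ℝ (Fin d), Integrable (fun y =>
      g (x + y) - g x - S.indicator (fun y => fderiv ℝ g x y) y) ν := by
    intro x
    exact hint_h₀.mono' (hFmeas x) (Filter.Eventually.of_forall (hbound x))
  refine ⟨hFint, ?_, ?_⟩
  · -- continuity
    have hDgc : Continuous fun x : EuclideanSpace ℝ (Fin d) => fderiv ℝ g x := hg.continuous_fderiv one_ne_zero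
    apply continuous_of_dominated hFmeas
      (fun x => Filter.Eventually.of_forall (hbound x)) hint_h₀
    apply Filter.Eventually.of_forall
    intro y
    have h1 : Continuous fun x : EuclideanSpace ℝ (Fin d) => g (x + y) :=
      hg.continuous.comp (continuous_id.add continuous_const)
    have h2 : Continuous fun x : EuclideanSpace ℝ (Fin d) => fderiv ℝ g x y :=
      hDgc.clm_apply continuous_const
    by_cases hy : y ∈ S
    · simp only [Set.indicator_of_mem hy]
      exact (h1.sub hg.continuous).sub h2
    · simp only [Set.indicator_of_notMem hy, sub_zero]
      exact h1.sub hg.continuous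
  · -- the bound
    intro x
    have step1 : |∫ y, (g (x + y) - g x - S.indicator (fun y => fderiv ℝ g x y) y) ∂ν|
        ≤ ∫ y, h₀ y ∂ν := by
      calc |∫ y, (g (x + y) - g x - S.indicator (fun y => fderiv ℝ g x y) y) ∂ν|
          = ‖∫ y, (g (x + y) - g x - S.indicator (fun y => fderiv ℝ g x y) y) ∂ν‖ :=
            (Real.norm_eq_abs _).symm
        _ ≤ ∫ y, ‖g (x + y) - g x - S.indicator (fun y => fderiv ℝ g x y) y‖ ∂ν :=
            norm_integral_le_integral_norm _
        _ ≤ ∫ y, h₀ y ∂ν :=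
            integral_mono (hFint x).norm hint_h₀ (hbound x)
    have hval : ∫ y, h₀ y ∂ν = C *
        (∫⁻ y in S, ENNReal.ofReal (‖y‖ ^ (1 + γ)) ∂ν).toReal + 2 * M * (ν Sᶜ).toReal := by
      rw [hh₀, integral_add I1 I2, integral_indicator hS, integral_indicator hS.compl]
      have e1 : ∫ y in S, C * ‖y‖ ^ (1 + γ) ∂ν
          = C * (∫⁻ y in S, ENNReal.ofReal (‖y‖ ^ (1 + γ)) ∂ν).toReal := by
        rw [integral_const_mul]
        congr 1
        rw [integral_eq_lintegral_of_nonneg_ae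
          (Filter.Eventually.of_forall fun y => by positivity)
          (continuous_norm.rpow_const fun y => Or.inr (by linarith [hγ.1])).aestronglyMeasurable.restrict]
      have e2 : ∫ _ in Sᶜ, (2 * M : ℝ) ∂ν = (ν Sᶜ).toReal * (2 * M) := by
        rw [setIntegral_const, smul_eq_mul]; rfl
      rw [e1, e2]; ring
    rw [hval, hScompl] at step1
    linarith
end
end

section
/- Let d ≥ 1, β ∈ (0,1), A, B > 0, let E be a normed real vector space, and let T be a linear map from the space of bounded continuous functions ℝ^d → ℝ to E such that ‖T g‖ ≤ A sup_x |g(x)| for every bounded continuous g, and ‖T g‖ ≤ B sup_x |Dg(x)| for every bounded continuously differentiable g with bounded gradient. Then there exists a constant c = c(d,β) > 0, independent of T, A, B, such that ‖T g‖ ≤ c A^{1−β} B^β [g]_β for every bounded continuous g with [g]_β < ∞. -/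
open scoped BoundedContinuousFunction

noncomputable section

open MeasureTheory Metric Function
open scoped Convolution ENNReal NNReal

lemma holderSemi_spec {β : ℝ} (hβ : 0 < β) {V F : Type*} [NormedAddCommGroup V]
    [NormedAddCommGroup F] (f : V → F)
    (h : ∃ C, 0 ≤ C ∧ ∀ x y, ‖f x - f y‖ ≤ C * ‖x - y‖ ^ β) :
    0 ≤ holderSemi β f ∧ ∀ x y, ‖f x - f y‖ ≤ holderSemi β f * ‖x - y‖ ^ β := by
  obtain ⟨C, hC0, hC⟩ := h
  have hne : {C : ℝ | 0 ≤ C ∧ ∀ x y, ‖f x - f y‖ ≤ C * ‖x - y‖ ^ β}.Nonempty := ⟨C, hC0, hC⟩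
  have h0 : 0 ≤ holderSemi β f := Real.sInf_nonneg (fun x hx => hx.1)
  refine ⟨h0, fun x y => ?_⟩
  rcases eq_or_ne x y with rfl | hxy
  · simp [Real.zero_rpow hβ.ne']
  · have hpos : 0 < ‖x - y‖ ^ β :=
      Real.rpow_pos_of_pos (norm_pos_iff.mpr (sub_ne_zero.mpr hxy)) β
    rw [← div_le_iff₀ hpos]
    apply le_csInf hne
    intro b hb
    rw [div_le_iff₀ hpos]
    exact hb.2 x y

set_option maxHeartbeats 3200000 in
/-- Mollification: for every `ε > 0` and every `β`-Hölder bounded continuous function `g`,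
there is a smooth bounded continuous function `h` with `‖Dh‖ ≤ c M ε^(β-1)` and
`‖g - h‖ ≤ c M ε^β`. -/
lemma mollify (d : ℕ) (hd : 1 ≤ d) {β : ℝ} (hβ0 : 0 < β) (hβ1 : β < 1) :
    ∃ c : ℝ, 0 < c ∧ ∀ ε : ℝ, 0 < ε → ∀ g : EuclideanSpace ℝ (Fin d) →ᵇ ℝ, ∀ M : ℝ, 0 ≤ M →
      (∀ x y, |g x - g y| ≤ M * ‖x - y‖ ^ β) →
      ∃ h : EuclideanSpace ℝ (Fin d) →ᵇ ℝ, ContDiff ℝ 1 (⇑h) ∧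
        (∀ x, ‖fderiv ℝ (⇑h) x‖ ≤ c * M * ε ^ (β - 1)) ∧
        ∀ x, |g x - h x| ≤ c * M * ε ^ β := by
  haveI : Nonempty (Fin d) := ⟨⟨0, hd⟩⟩
  haveI : Nontrivial (EuclideanSpace ℝ (Fin d)) := by
    refine nontrivial_of_ne 0 (EuclideanSpace.single ⟨0, hd⟩ 1) fun hcon => ?_
    have := congrArg (fun v : EuclideanSpace ℝ (Fin d) => v ⟨0, hd⟩) hcon
    simp [EuclideanSpace.single_apply] at this
  set φ : ContDiffBump (0 : EuclideanSpace ℝ (Fin d)) := ⟨1, 2, one_pos, one_lt_two⟩ with hφ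
  set φn : EuclideanSpace ℝ (Fin d) → ℝ := φ.normed volume with hφn_def
  obtain ⟨K, hK⟩ := ContDiff.lipschitzWith_of_hasCompactSupport (φ.hasCompactSupport_normed (μ := volume))
      (φ.contDiff_normed (n := ⊤) (μ := volume)) (by simp)
  have hKabs : ∀ a b, |φn a - φn b| ≤ K * ‖a - b‖ := by
    intro a b
    have := hK.dist_le_mul a b
    simpa [Real.dist_eq, dist_eq_norm] using this
  set ω : ℝ := (volume (ball (0 : EuclideanSpace ℝ (Fin d)) 1)).toReal with hω_def
  have hω0 : 0 ≤ ω := ENNReal.toReal_nonneg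
  have h2β : (0:ℝ) < 2 ^ β := Real.rpow_pos_of_pos two_pos β
  have h3β : (0:ℝ) < 3 ^ β := Real.rpow_pos_of_pos (by norm_num) β
  set c0 : ℝ := 2 ^ β + (K : ℝ) * 3 ^ β * 3 ^ d * ω + 1 with hc0_def
  have hKω0 : 0 ≤ (K : ℝ) * 3 ^ β * 3 ^ d * ω := by positivity
  have hc0 : 0 < c0 := by rw [hc0_def]; nlinarith
  refine ⟨c0, hc0, ?_⟩
  intro ε hε g M hM hg
  have hεd : (0:ℝ) < ε ^ d := pow_pos hε d
  set k : EuclideanSpace ℝ (Fin d) → ℝ := fun y => (ε ^ d)⁻¹ * φn (ε⁻¹ • y) with hk_def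
  have hk_nonneg : ∀ y, 0 ≤ k y := fun y =>
    mul_nonneg (inv_nonneg.2 hεd.le) (φ.nonneg_normed _)
  have hφn_zero : ∀ x : EuclideanSpace ℝ (Fin d), 2 ≤ ‖x‖ → φn x = 0 := by
    intro x hx
    by_contra hcon
    have hmem : x ∈ Function.support φn := hcon
    rw [hφn_def, φ.support_normed_eq, mem_ball_zero_iff] at hmem
    have : φ.rOut = 2 := rfl
    rw [this] at hmem
    linarith
  have hk_zero : ∀ y : EuclideanSpace ℝ (Fin d), 2 * ε ≤ ‖y‖ → k y = 0 := by
    intro y hy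
    have h1 : (2:ℝ) ≤ ‖ε⁻¹ • y‖ := by
      rw [norm_smul, norm_inv, Real.norm_eq_abs, abs_of_pos hε]
      rw [le_inv_mul_iff₀ hε]
      linarith
    simp [hk_def, hφn_zero _ h1]
  have hk_cd : ContDiff ℝ ((⊤ : ℕ∞) : WithTop ℕ∞) k := by
    have h1 : ContDiff ℝ ((⊤ : ℕ∞) : WithTop ℕ∞)
        (fun y : EuclideanSpace ℝ (Fin d) => φn (ε⁻¹ • y)) :=
      (φ.contDiff_normed (n := ⊤) (μ := volume)).comp (contDiff_const_smul ε⁻¹)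
    exact contDiff_const.mul h1
  have hk_cont : Continuous k := hk_cd.continuous
  have hk_hcs : HasCompactSupport k := by
    apply HasCompactSupport.intro (isCompact_closedBall (0 : EuclideanSpace ℝ (Fin d)) (2*ε))
    intro y hy
    apply hk_zero
    have : ¬ dist y 0 ≤ 2 * ε := fun hc => hy (mem_closedBall.mpr hc)
    rw [dist_zero_right] at this
    linarith
  have hk_int : Integrable k volume := hk_cont.integrable_of_hasCompactSupport hk_hcs
  have hk_one : (∫ y, k y) = 1 := by
    rw [hk_def]
    rw [MeasureTheory.integral_const_mul]
    rw [Measure.integral_comp_inv_smul volume φn ε]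
    rw [hφn_def, φ.integral_normed, finrank_euclideanSpace_fin, smul_eq_mul, mul_one,
      abs_of_pos hεd, inv_mul_cancel₀ hεd.ne']
  have hk_lip : ∀ a b : EuclideanSpace ℝ (Fin d),
      |k a - k b| ≤ (ε ^ d)⁻¹ * ((K : ℝ) * ε⁻¹) * ‖a - b‖ := by
    intro a b
    have e1 : k a - k b = (ε ^ d)⁻¹ * (φn (ε⁻¹ • a) - φn (ε⁻¹ • b)) := by
      rw [hk_def]; ring
    rw [e1, abs_mul, abs_of_nonneg (inv_nonneg.2 hεd.le)]
    have e2 : ‖ε⁻¹ • a - ε⁻¹ • b‖ = ε⁻¹ * ‖a - b‖ := by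
      rw [← smul_sub, norm_smul, norm_inv, Real.norm_eq_abs, abs_of_pos hε]
    calc (ε ^ d)⁻¹ * |φn (ε⁻¹ • a) - φn (ε⁻¹ • b)|
        ≤ (ε ^ d)⁻¹ * ((K : ℝ) * ‖ε⁻¹ • a - ε⁻¹ • b‖) :=
          mul_le_mul_of_nonneg_left (hKabs _ _) (inv_nonneg.2 hεd.le)
      _ = (ε ^ d)⁻¹ * ((K : ℝ) * ε⁻¹) * ‖a - b‖ := by rw [e2]; ring
  have hgc : Continuous (⇑g) := g.continuous
  have hgli : LocallyIntegrable (⇑g) volume := hgc.locallyIntegrable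
  set gε : EuclideanSpace ℝ (Fin d) → ℝ :=
    k ⋆[ContinuousLinearMap.lsmul ℝ ℝ, volume] ⇑g with hgε_def
  have hgε_cd : ContDiff ℝ ((⊤ : ℕ∞) : WithTop ℕ∞) gε :=
    hk_hcs.contDiff_convolution_left (ContinuousLinearMap.lsmul ℝ ℝ) hk_cd hgli
  have hconv_pt : ∀ x, gε x = ∫ t, k t * g (x - t) := by
    intro x
    rw [hgε_def]
    simp [convolution_def, ContinuousLinearMap.lsmul_apply, smul_eq_mul]
  have hint1 : ∀ x : EuclideanSpace ℝ (Fin d),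
      Integrable (fun t => k t * g (x - t)) volume := by
    intro x
    apply Continuous.integrable_of_hasCompactSupport
    · exact hk_cont.mul (hgc.comp (continuous_const.sub continuous_id))
    · exact hk_hcs.mul_right
  have hclose : ∀ x : EuclideanSpace ℝ (Fin d), |gε x - g x| ≤ 2 ^ β * M * ε ^ β := by
    intro x
    have e1 : gε x - g x = ∫ t, k t * (g (x - t) - g x) := by
      have e2 : (∫ t, k t * (g (x - t) - g x))
          = (∫ t, k t * g (x - t)) - ∫ t, k t * g x := by
        simp_rw [mul_sub]
        exact integral_sub (hint1 x) (hk_int.mul_const _)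
      rw [e2, MeasureTheory.integral_mul_const, hk_one, hconv_pt x]
      ring
    rw [e1]
    have bound : ∀ t : EuclideanSpace ℝ (Fin d),
        ‖k t * (g (x - t) - g x)‖ ≤ k t * (M * (2 * ε) ^ β) := by
      intro t
      rw [Real.norm_eq_abs, abs_mul, abs_of_nonneg (hk_nonneg t)]
      by_cases hkt : k t = 0
      · simp [hkt]
      · have ht : ‖t‖ < 2 * ε := lt_of_not_ge (fun hcon => hkt (hk_zero t hcon))
        have h1 : |g (x - t) - g x| ≤ M * ‖t‖ ^ β := by
          have := hg (x - t) x
          simpa using this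
        have h2 : M * ‖t‖ ^ β ≤ M * (2 * ε) ^ β := by
          apply mul_le_mul_of_nonneg_left _ hM
          exact Real.rpow_le_rpow (norm_nonneg t) ht.le hβ0.le
        exact mul_le_mul_of_nonneg_left (h1.trans h2) (hk_nonneg t)
    have h3 : |∫ t, k t * (g (x - t) - g x)| ≤ ∫ t, k t * (M * (2 * ε) ^ β) := by
      have := norm_integral_le_of_norm_le (hk_int.mul_const _)
        (Filter.Eventually.of_forall bound)
      simpa [Real.norm_eq_abs] using this
    refine h3.trans ?_
    rw [MeasureTheory.integral_mul_const, hk_one, one_mul,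
      Real.mul_rpow (by norm_num : (0:ℝ) ≤ 2) hε.le]
    ring_nf
    exact le_refl _
  have hswap : ∀ x : EuclideanSpace ℝ (Fin d), gε x = ∫ s, k (x - s) * g s := by
    intro x
    rw [hconv_pt x]
    have := MeasureTheory.integral_sub_left_eq_self
      (fun t => k (x - t) * g t) volume x
    simp only [sub_sub_cancel] at this
    exact this
  have hkx_hcs : ∀ x : EuclideanSpace ℝ (Fin d),
      HasCompactSupport (fun s => k (x - s)) := by
    intro x
    apply HasCompactSupport.intro (isCompact_closedBall x (2*ε))
    intro s hs
    apply hk_zero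
    have h4 : ¬ dist s x ≤ 2 * ε := fun hc => hs (mem_closedBall.mpr hc)
    rw [dist_eq_norm] at h4
    rw [norm_sub_rev]
    linarith
  have hkx_cont : ∀ x : EuclideanSpace ℝ (Fin d), Continuous (fun s => k (x - s)) :=
    fun x => hk_cont.comp (continuous_const.sub continuous_id)
  have hint2 : ∀ x : EuclideanSpace ℝ (Fin d),
      Integrable (fun s => k (x - s) * g s) volume := fun x =>
    Continuous.integrable_of_hasCompactSupport ((hkx_cont x).mul hgc) ((hkx_hcs x).mul_right)
  have hkx_int : ∀ x : EuclideanSpace ℝ (Fin d), Integrable (fun s => k (x - s)) volume :=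
    fun x => (hkx_cont x).integrable_of_hasCompactSupport (hkx_hcs x)
  have hkx_one : ∀ x : EuclideanSpace ℝ (Fin d), (∫ s, k (x - s)) = 1 := by
    intro x
    rw [MeasureTheory.integral_sub_left_eq_self k volume x]
    exact hk_one
  set L : ℝ := (ε ^ d)⁻¹ * ((K : ℝ) * ε⁻¹) * (M * (3 * ε) ^ β) * ((3 * ε) ^ d * ω)
    with hL_def
  have hL0 : 0 ≤ L := by
    rw [hL_def]
    have h3ε : (0:ℝ) ≤ (3 * ε) ^ β := Real.rpow_nonneg (by linarith) β
    positivity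
  have hlipg : ∀ x₀ x y : EuclideanSpace ℝ (Fin d), x ∈ ball x₀ ε → y ∈ ball x₀ ε →
      |gε x - gε y| ≤ L * ‖x - y‖ := by
    intro x₀ x y hx hy
    have i1 : Integrable (fun s => k (x - s) * (g s - g x₀)) volume := by
      have e : (fun s => k (x - s) * (g s - g x₀))
          = fun s => k (x - s) * g s - k (x - s) * g x₀ := funext fun s => by ring
      rw [e]; exact (hint2 x).sub ((hkx_int x).mul_const _)
    have i2 : Integrable (fun s => k (y - s) * (g s - g x₀)) volume := by
      have e : (fun s => k (y - s) * (g s - g x₀))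
          = fun s => k (y - s) * g s - k (y - s) * g x₀ := funext fun s => by ring
      rw [e]; exact (hint2 y).sub ((hkx_int y).mul_const _)
    have e_x : (∫ s, k (x - s) * (g s - g x₀)) = gε x - g x₀ := by
      have e : (fun s => k (x - s) * (g s - g x₀))
          = fun s => k (x - s) * g s - k (x - s) * g x₀ := funext fun s => by ring
      rw [e, integral_sub (hint2 x) ((hkx_int x).mul_const (g x₀)),
        MeasureTheory.integral_mul_const, hkx_one x, one_mul, hswap x]
    have e_y : (∫ s, k (y - s) * (g s - g x₀)) = gε y - g x₀ := by
      have e : (fun s => k (y - s) * (g s - g x₀))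
          = fun s => k (y - s) * g s - k (y - s) * g x₀ := funext fun s => by ring
      rw [e, integral_sub (hint2 y) ((hkx_int y).mul_const (g x₀)),
        MeasureTheory.integral_mul_const, hkx_one y, one_mul, hswap y]
    have e1 : gε x - gε y = ∫ s, (k (x - s) - k (y - s)) * (g s - g x₀) := by
      calc gε x - gε y = (gε x - g x₀) - (gε y - g x₀) := by ring
        _ = (∫ s, k (x - s) * (g s - g x₀)) - ∫ s, k (y - s) * (g s - g x₀) := by
            rw [e_x, e_y]
        _ = ∫ s, (k (x - s) - k (y - s)) * (g s - g x₀) := by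
            rw [← integral_sub i1 i2]
            apply integral_congr_ae
            filter_upwards with s
            ring
    rw [e1]
    set C1 : ℝ := (ε ^ d)⁻¹ * ((K : ℝ) * ε⁻¹) * ‖x - y‖ * (M * (3 * ε) ^ β) with hC1_def
    have h3εβ : (0:ℝ) ≤ (3 * ε) ^ β := Real.rpow_nonneg (by linarith) β
    have hC10 : 0 ≤ C1 := by rw [hC1_def]; positivity
    have hbound : ∀ s : EuclideanSpace ℝ (Fin d),
        ‖(k (x - s) - k (y - s)) * (g s - g x₀)‖
          ≤ (ball x₀ (3 * ε)).indicator (fun _ => C1) s := by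
      intro s
      by_cases hs : s ∈ ball x₀ (3 * ε)
      · rw [Set.indicator_of_mem hs]
        rw [Real.norm_eq_abs, abs_mul]
        have h1 : |k (x - s) - k (y - s)| ≤ (ε ^ d)⁻¹ * ((K : ℝ) * ε⁻¹) * ‖x - y‖ := by
          have := hk_lip (x - s) (y - s)
          simpa [sub_sub_sub_cancel_right] using this
        have h2 : |g s - g x₀| ≤ M * (3 * ε) ^ β := by
          refine (hg s x₀).trans ?_
          apply mul_le_mul_of_nonneg_left _ hM
          apply Real.rpow_le_rpow (norm_nonneg _) _ hβ0.le
          have h5 : dist s x₀ < 3 * ε := mem_ball.mp hs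
          rw [dist_eq_norm] at h5
          exact h5.le
        rw [hC1_def]
        exact mul_le_mul h1 h2 (abs_nonneg _) (by positivity)
      · rw [Set.indicator_of_notMem hs]
        have h3 : 3 * ε ≤ dist s x₀ := le_of_not_gt (fun hcon => hs (mem_ball.mpr hcon))
        have hxx₀ : dist x x₀ < ε := mem_ball.mp hx
        have hyx₀ : dist y x₀ < ε := mem_ball.mp hy
        have hxs : k (x - s) = 0 := by
          apply hk_zero
          have htri : dist s x₀ ≤ dist s x + dist x x₀ := dist_triangle s x x₀
          have h7 : 2 * ε ≤ dist x s := by rw [dist_comm]; linarith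
          rwa [dist_eq_norm] at h7
        have hys : k (y - s) = 0 := by
          apply hk_zero
          have htri : dist s x₀ ≤ dist s y + dist y x₀ := dist_triangle s y x₀
          have h7 : 2 * ε ≤ dist y s := by rw [dist_comm]; linarith
          rwa [dist_eq_norm] at h7
        simp [hxs, hys]
    have hbint : Integrable ((ball x₀ (3 * ε)).indicator (fun _ => C1)) volume := by
      rw [integrable_indicator_iff measurableSet_ball]
      exact integrableOn_const measure_ball_lt_top.ne
    have h5 : |∫ s, (k (x - s) - k (y - s)) * (g s - g x₀)|
        ≤ ∫ s, (ball x₀ (3 * ε)).indicator (fun _ => C1) s := by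
      have := norm_integral_le_of_norm_le hbint (Filter.Eventually.of_forall hbound)
      simpa [Real.norm_eq_abs] using this
    refine h5.trans ?_
    rw [MeasureTheory.integral_indicator measurableSet_ball, setIntegral_const, measureReal_def,
      Measure.addHaar_ball _ _ (by positivity : (0:ℝ) ≤ 3 * ε),
      ENNReal.toReal_mul, ENNReal.toReal_ofReal (by positivity), finrank_euclideanSpace_fin,
      smul_eq_mul]
    rw [hC1_def, hL_def, ← hω_def]
    ring_nf
    exact le_refl _
  have hfd : ∀ x₀ : EuclideanSpace ℝ (Fin d), ‖fderiv ℝ gε x₀‖ ≤ L := by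
    intro x₀
    apply norm_fderiv_le_of_lip' ℝ hL0
    filter_upwards [ball_mem_nhds x₀ hε] with x hx
    have := hlipg x₀ x x₀ hx (mem_ball_self hε)
    simpa [Real.norm_eq_abs] using this
  have hLle : L ≤ c0 * M * ε ^ (β - 1) := by
    have hεβ : (0:ℝ) < ε ^ β := Real.rpow_pos_of_pos hε β
    have e3 : L = ((K : ℝ) * 3 ^ β * 3 ^ d * ω) * M * ε ^ (β - 1) := by
      rw [hL_def, Real.mul_rpow (by norm_num : (0:ℝ) ≤ 3) hε.le, mul_pow,
        Real.rpow_sub hε, Real.rpow_one]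
      field_simp
    rw [e3]
    have h6 : (K : ℝ) * 3 ^ β * 3 ^ d * ω ≤ c0 := by
      rw [hc0_def]; nlinarith
    have hεβ1 : (0:ℝ) ≤ ε ^ (β - 1) := Real.rpow_nonneg hε.le _
    exact mul_le_mul_of_nonneg_right (mul_le_mul_of_nonneg_right h6 hM) hεβ1
  have h2c0 : (2:ℝ) ^ β ≤ c0 := by rw [hc0_def]; nlinarith
  have hεβ0 : (0:ℝ) ≤ ε ^ β := Real.rpow_nonneg hε.le _
  have hgεb : ∀ x, ‖gε x‖ ≤ 2 ^ β * M * ε ^ β + ‖g‖ := by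
    intro x
    rw [Real.norm_eq_abs]
    calc |gε x| = |(gε x - g x) + g x| := by ring_nf
      _ ≤ |gε x - g x| + |g x| := abs_add_le _ _
      _ ≤ 2 ^ β * M * ε ^ β + ‖g‖ := by
          have := g.norm_coe_le_norm x
          rw [Real.norm_eq_abs] at this
          exact add_le_add (hclose x) this
  refine ⟨BoundedContinuousFunction.ofNormedAddCommGroup gε hgε_cd.continuous _ hgεb,
    ?_, ?_, ?_⟩
  · show ContDiff ℝ 1 gε
    exact hgε_cd.of_le (by exact_mod_cast le_top)
  · intro x
    show ‖fderiv ℝ gε x‖ ≤ c0 * M * ε ^ (β - 1)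
    exact (hfd x).trans hLle
  · intro x
    show |g x - gε x| ≤ c0 * M * ε ^ β
    rw [abs_sub_comm]
    refine (hclose x).trans ?_
    exact mul_le_mul_of_nonneg_right (mul_le_mul_of_nonneg_right h2c0 hM) hεβ0

/-- interpolation inequality `(C_b, C_b^1)_{β,∞} = C_b^β`. If a linear map `T`
on bounded continuous functions satisfies `‖Tg‖ ≤ A ‖g‖_∞` and `‖Tg‖ ≤ B ‖Dg‖_∞` (for `C¹`
functions with bounded gradient), then `‖Tg‖ ≤ c A^{1-β} B^β [g]_β` for `β`-Hölder `g`, with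
`c = c(d,β)` independent of `T`, `A`, `B`. -/
theorem interpolation_inequality (d : ℕ) (hd : 1 ≤ d) (β : ℝ) (hβ : 0 < β ∧ β < 1) :
    ∃ c : ℝ, 0 < c ∧
      ∀ (E : Type) [NormedAddCommGroup E] [NormedSpace ℝ E]
        (A B : ℝ), 0 < A → 0 < B →
        ∀ T : (EuclideanSpace ℝ (Fin d) →ᵇ ℝ) →ₗ[ℝ] E,
          (∀ g : EuclideanSpace ℝ (Fin d) →ᵇ ℝ, ‖T g‖ ≤ A * ‖g‖) →
          (∀ g : EuclideanSpace ℝ (Fin d) →ᵇ ℝ, ContDiff ℝ 1 (⇑g) →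
            BddAbove (Set.range fun x => ‖fderiv ℝ (⇑g) x‖) →
            ‖T g‖ ≤ B * ⨆ x, ‖fderiv ℝ (⇑g) x‖) →
          ∀ g : EuclideanSpace ℝ (Fin d) →ᵇ ℝ,
            (∃ C, 0 ≤ C ∧ ∀ x y, |g x - g y| ≤ C * ‖x - y‖ ^ β) →
            ‖T g‖ ≤ c * A ^ (1 - β) * B ^ β * holderSemi β (⇑g) := by
  obtain ⟨hβ0, hβ1⟩ := hβ
  obtain ⟨c0, hc0, hmoll⟩ := mollify d hd hβ0 hβ1
  refine ⟨2 * c0, by positivity, ?_⟩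
  intro E _ _ A B hA hB T hT0 hT1 g hgH
  obtain ⟨hM0, hMle⟩ := holderSemi_spec hβ0 (⇑g)
    (by simpa [Real.norm_eq_abs] using hgH)
  set M := holderSemi β (⇑g) with hM_def
  set ε := B / A with hε_def
  have hε : 0 < ε := div_pos hB hA
  obtain ⟨h, hcd, hfd, hcl⟩ := hmoll ε hε g M hM0
    (fun x y => by simpa [Real.norm_eq_abs] using hMle x y)
  have hεβ0 : (0:ℝ) ≤ ε ^ β := Real.rpow_nonneg hε.le _
  have hnorm_sub : ‖g - h‖ ≤ c0 * M * ε ^ β := by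
    apply (BoundedContinuousFunction.norm_le (by positivity)).mpr
    intro x
    simpa [Real.norm_eq_abs] using hcl x
  have hbdd : BddAbove (Set.range fun x => ‖fderiv ℝ (⇑h) x‖) := by
    refine ⟨c0 * M * ε ^ (β - 1), ?_⟩
    rintro _ ⟨x, rfl⟩
    exact hfd x
  have hsup : (⨆ x, ‖fderiv ℝ (⇑h) x‖) ≤ c0 * M * ε ^ (β - 1) := ciSup_le hfd
  have key : ‖T g‖ ≤ A * (c0 * M * ε ^ β) + B * (c0 * M * ε ^ (β - 1)) := by
    have e : T g = T (g - h) + T h := by rw [map_sub, sub_add_cancel]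
    rw [e]
    refine (norm_add_le _ _).trans (add_le_add ?_ ?_)
    · exact (hT0 _).trans (mul_le_mul_of_nonneg_left hnorm_sub hA.le)
    · exact (hT1 h hcd hbdd).trans (mul_le_mul_of_nonneg_left hsup hB.le)
  have hAβ : (0:ℝ) < A ^ β := Real.rpow_pos_of_pos hA β
  have hBβ : (0:ℝ) < B ^ β := Real.rpow_pos_of_pos hB β
  have hAε : A * ε ^ β = A ^ (1 - β) * B ^ β := by
    rw [hε_def, Real.div_rpow hB.le hA.le, Real.rpow_sub hA, Real.rpow_one]
    field_simp
  have hBε : B * ε ^ (β - 1) = A ^ (1 - β) * B ^ β := by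
    rw [hε_def, Real.div_rpow hB.le hA.le, Real.rpow_sub hA, Real.rpow_sub hB,
      Real.rpow_one, Real.rpow_one]
    have hAA : A ^ (1 - β) * A ^ β = A := by
      rw [← Real.rpow_add hA]; norm_num
    field_simp
    linear_combination (-1) * hAA
  calc ‖T g‖ ≤ A * (c0 * M * ε ^ β) + B * (c0 * M * ε ^ (β - 1)) := key
    _ = c0 * M * (A * ε ^ β) + c0 * M * (B * ε ^ (β - 1)) := by ring
    _ = 2 * c0 * A ^ (1 - β) * B ^ β * M := by rw [hAε, hBε]; ring
end
end
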